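/- Let V = (a, b) ∈ ℝ² with a + b ≠ 0, and set θ* = arctan((b − a)/(a + b)). Let G* be the rotation matrix with rows (cos θ*, −sin θ*) and (sin θ*, cos θ*). Then writing VG* = (x₁, x₂), one has |x₁| = |x₂| = √((a² + b²)/2); in particular ‖VG*‖_∞ = √((a² + b²)/2). -/

import Mathlib

open Matrix Real

/-- Let `V = (a, b) ∈ ℝ²` with `a + b ≠ 0` and set `θ* = arctan ((b − a)/(a + b))`.
Let `G*` be the rotation matrix with rows `(cos θ*, −sin θ*)` and `(sin θ*, cos θ*)`.
Writing `VG* = (x₁, x₂)`, one has `|x₁| = |x₂| = √((a² + b²)/2)`;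
in particular `‖VG*‖_∞ = √((a² + b²)/2)`. -/
theorem abs_vecMul_optimal_rotation (a b : ℝ) (hab : a + b ≠ 0)
    (θ : ℝ) (hθ : θ = Real.arctan ((b - a) / (a + b)))
    (G : Matrix (Fin 2) (Fin 2) ℝ)
    (hG : G = !![Real.cos θ, -Real.sin θ; Real.sin θ, Real.cos θ]) :
    |(![a, b] ᵥ* G) 0| = Real.sqrt ((a ^ 2 + b ^ 2) / 2) ∧
    |(![a, b] ᵥ* G) 1| = Real.sqrt ((a ^ 2 + b ^ 2) / 2) ∧
    max |(![a, b] ᵥ* G) 0| |(![a, b] ᵥ* G) 1| = Real.sqrt ((a ^ 2 + b ^ 2) / 2) := by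
  subst hG hθ
  set t : ℝ := (b - a) / (a + b) with ht
  have hs : Real.sqrt (1 + t ^ 2) > 0 := Real.sqrt_pos.mpr (by positivity)
  have hs2 : Real.sqrt (1 + t ^ 2) ^ 2 = 1 + t ^ 2 := Real.sq_sqrt (by positivity)
  have e0 : (![a, b] ᵥ* !![Real.cos (arctan t), -Real.sin (arctan t);
      Real.sin (arctan t), Real.cos (arctan t)]) 0 =
      a * Real.cos (arctan t) + b * Real.sin (arctan t) := by
    simp [Matrix.vecMul, dotProduct, Fin.sum_univ_two]
  have e1 : (![a, b] ᵥ* !![Real.cos (arctan t), -Real.sin (arctan t);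
      Real.sin (arctan t), Real.cos (arctan t)]) 1 =
      a * -Real.sin (arctan t) + b * Real.cos (arctan t) := by
    simp [Matrix.vecMul, dotProduct, Fin.sum_univ_two]
  have heq : a * -Real.sin (arctan t) + b * Real.cos (arctan t)
      = a * Real.cos (arctan t) + b * Real.sin (arctan t) := by
    rw [Real.cos_arctan, Real.sin_arctan]
    rw [ht]
    field_simp
    ring
  have hsq : (a * Real.cos (arctan t) + b * Real.sin (arctan t)) ^ 2
      = (a ^ 2 + b ^ 2) / 2 := by
    rw [Real.cos_arctan, Real.sin_arctan]
    have hab2 : a ^ 2 + b ^ 2 ≠ 0 := by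
      intro h
      have ha : a = 0 := by nlinarith
      have hb : b = 0 := by nlinarith
      exact hab (by rw [ha, hb]; ring)
    field_simp
    rw [ht]
    field_simp
    rw [Real.sq_sqrt (by positivity)]
    field_simp
    ring
  have habs : |a * Real.cos (arctan t) + b * Real.sin (arctan t)|
      = Real.sqrt ((a ^ 2 + b ^ 2) / 2) := by
    rw [← hsq, Real.sqrt_sq_eq_abs]
  rw [e0, e1, heq, habs]
  simp
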